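/- For complex P, Q with P ≠ 0, the termwise limit of the ₁φ̃₀ coefficient as the q-component parameter tends to infinity after rescaling z by 1/a_q: for each n ≥ 1, lim_{a_q → ∞} ((a_p, a_q); (P,Q))_n · (1/a_q)^n = (-1)^n Q^{n(n-1)/2}, i.e., it equals ((0,1);(P,Q))_n = ∏_{k=0}^{n-1}(0·P^k - 1·Q^k). -/
import Mathlib

theorem pq_shifted_factorial_limit (P Q ap : ℂ) (hP : P ≠ 0) (n : ℕ) (hn : 1 ≤ n) :
    Filter.Tendsto
      (fun aq : ℂ =>
        (∏ k ∈ Finset.range n, (ap * P ^ k - aq * Q ^ k)) * (1 / aq) ^ n)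
      (Bornology.cobounded ℂ)
      (nhds ((-1 : ℂ) ^ n * Q ^ (n * (n - 1) / 2))) ∧
    (-1 : ℂ) ^ n * Q ^ (n * (n - 1) / 2) =
      ∏ k ∈ Finset.range n, ((0 : ℂ) * P ^ k - 1 * Q ^ k) := by
  have key : ((-1 : ℂ)) ^ n * Q ^ (n * (n - 1) / 2) =
      ∏ k ∈ Finset.range n, (-(Q ^ k)) := by
    have : ∀ k : ℕ, -(Q ^ k) = (-1 : ℂ) * Q ^ k := fun k => by ring
    simp only [this, Finset.prod_mul_distrib, Finset.prod_const, Finset.card_range]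
    rw [Finset.prod_pow_eq_pow_sum, Finset.sum_range_id]
  constructor
  · set g : ℂ → ℂ := fun w => ∏ k ∈ Finset.range n, (ap * P ^ k * w - Q ^ k) with hg
    have hcont : Continuous g := by
      apply continuous_finset_prod
      intro k _
      fun_prop
    have hg0 : g 0 = (-1 : ℂ) ^ n * Q ^ (n * (n - 1) / 2) := by
      rw [key, hg]
      simp
    have htend : Filter.Tendsto (fun aq : ℂ => g aq⁻¹) (Bornology.cobounded ℂ)
        (nhds ((-1 : ℂ) ^ n * Q ^ (n * (n - 1) / 2))) := by
      rw [← hg0]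
      exact (hcont.tendsto 0).comp Filter.tendsto_inv₀_cobounded
    refine htend.congr' ?_
    filter_upwards [Bornology.eventually_ne_cobounded 0] with aq haq
    simp only [hg]
    have h2 : (1 / aq) ^ n = ∏ _k ∈ Finset.range n, aq⁻¹ := by simp
    rw [h2, ← Finset.prod_mul_distrib]
    refine Finset.prod_congr rfl fun k _ => ?_
    field_simp
  · rw [key]
    congr 1 with k
    ring
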